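/- Let K(x,y) = ⟨y⟩^{(1+α)/2} / ( ⟨x−y⟩^{1+α} ⟨x⟩^{(1+α)/2} ) restricted to the region |x−y| ≥ (⟨x⟩+⟨y⟩)/2, where α > 0 and ⟨x⟩ = √(1+x²). Then there exists C > 0 such that ∫ K(x,y) ⟨x⟩^{−1/2} dx ≤ C ⟨y⟩^{−(1+α)/2} for all y and ∫ K(x,y) ⟨y⟩^{−(1+α)/2} dy ≤ C ⟨x⟩^{−1/2} for all x; consequently the integral operator with kernel K is bounded on L²(ℝ). -/

import Mathlib

open MeasureTheory
open scoped ENNReal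

noncomputable def jb (x : ℝ) : ℝ := Real.sqrt (1 + x ^ 2)

lemma jb_pos (x : ℝ) : 0 < jb x := Real.sqrt_pos.mpr (by positivity)

lemma one_le_jb (x : ℝ) : 1 ≤ jb x := by
  have h : Real.sqrt 1 ≤ Real.sqrt (1 + x ^ 2) := Real.sqrt_le_sqrt (by nlinarith [sq_nonneg x])
  rwa [Real.sqrt_one] at h

lemma abs_le_jb (t : ℝ) : |t| ≤ jb t := by
  rw [← Real.sqrt_sq_eq_abs]
  exact Real.sqrt_le_sqrt (by nlinarith)

lemma jb_rpow (x s : ℝ) : jb x ^ s = (1 + x ^ 2) ^ (s / 2) := by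
  have : jb x = (1 + x ^ 2) ^ ((1:ℝ)/2) := by
    simp only [jb]; rw [Real.sqrt_eq_rpow]
  rw [this, ← Real.rpow_mul (by positivity)]
  ring_nf

lemma jb_int {p : ℝ} (hp : 1 < p) : Integrable (fun x : ℝ => jb x ^ (-p)) volume := by
  have h := integrable_rpow_neg_one_add_norm_sq (E := ℝ) (μ := volume) (r := p)
    (by simpa using hp)
  refine h.congr (Filter.Eventually.of_forall fun x => ?_)
  simp only [Real.norm_eq_abs, sq_abs]
  rw [jb_rpow]

lemma jb_cont : Continuous jb := by
  have : jb = fun x : ℝ => Real.sqrt (1 + x ^ 2) := rfl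
  rw [this]; fun_prop

lemma jb_rpow_cont (s : ℝ) : Continuous (fun x : ℝ => jb x ^ s) :=
  jb_cont.rpow_const (fun x => Or.inl (jb_pos x).ne')

lemma key_bound {α : ℝ} (hα : 0 < α) {x y : ℝ} (h : (jb x + jb y) / 2 ≤ |x - y|) :
    jb y ^ ((1 + α) / 2) / (jb (x - y) ^ (1 + α) * jb x ^ ((1 + α) / 2)) ≤
      (2:ℝ) ^ (1 + α) * (jb x ^ (-(1 + α) / 2) * jb y ^ (-(1 + α) / 2)) := by
  have ha := jb_pos x
  have hb := jb_pos y
  have hc := jb_pos (x - y)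
  have hbc : jb y ≤ 2 * jb (x - y) := by
    have h1 := abs_le_jb (x - y)
    nlinarith
  have key : jb y ^ (1 + α) ≤ 2 ^ (1 + α) * jb (x - y) ^ (1 + α) := by
    calc jb y ^ (1 + α) ≤ (2 * jb (x - y)) ^ (1 + α) :=
          Real.rpow_le_rpow hb.le hbc (by linarith)
      _ = _ := Real.mul_rpow (by norm_num) hc.le
  have ha1 : jb x ^ (-(1 + α) / 2) * jb x ^ ((1 + α) / 2) = 1 := by
    rw [← Real.rpow_add ha, show (-(1 + α) / 2 + (1 + α) / 2 : ℝ) = 0 by ring, Real.rpow_zero]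
  have hb1 : jb y ^ (1 + α) * jb y ^ (-(1 + α) / 2) = jb y ^ ((1 + α) / 2) := by
    rw [← Real.rpow_add hb]
    congr 1
    ring
  rw [div_le_iff₀ (by positivity)]
  have hbnn : (0:ℝ) ≤ jb y ^ (-(1 + α) / 2) := Real.rpow_nonneg hb.le _
  calc jb y ^ ((1 + α) / 2) = jb y ^ (1 + α) * jb y ^ (-(1 + α) / 2) := hb1.symm
    _ ≤ 2 ^ (1 + α) * jb (x - y) ^ (1 + α) * jb y ^ (-(1 + α) / 2) :=
        mul_le_mul_of_nonneg_right key hbnn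
    _ = 2 ^ (1 + α) * (jb x ^ (-(1 + α) / 2) * jb y ^ (-(1 + α) / 2)) *
        (jb (x - y) ^ (1 + α) * jb x ^ ((1 + α) / 2)) := by
        linear_combination -(2:ℝ) ^ (1 + α) * jb (x - y) ^ (1 + α) * jb y ^ (-(1 + α) / 2) * ha1

/-- Schur bounds and `L²` boundedness for the far-off-diagonal kernel
`K(x,y) = ⟨y⟩^{(1+α)/2} / (⟨x-y⟩^{1+α} ⟨x⟩^{(1+α)/2})` restricted to
`|x-y| ≥ (⟨x⟩+⟨y⟩)/2`. -/
theorem stmt7 (α : ℝ) (hα : 0 < α)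
    (K : ℝ → ℝ → ℝ)
    (hK : ∀ x y : ℝ, K x y =
      if (jb x + jb y) / 2 ≤ |x - y| then
        jb y ^ ((1 + α) / 2) / (jb (x - y) ^ (1 + α) * jb x ^ ((1 + α) / 2))
      else 0) :
    (∃ C > 0,
      (∀ y : ℝ, (∫ x : ℝ, K x y * jb x ^ (-(1 : ℝ) / 2)) ≤ C * jb y ^ (-(1 + α) / 2)) ∧
      (∀ x : ℝ, (∫ y : ℝ, K x y * jb y ^ (-(1 + α) / 2)) ≤ C * jb x ^ (-(1 : ℝ) / 2))) ∧
    ∃ C' > 0, ∀ f : ℝ → ℝ, MemLp f 2 volume →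
      MemLp (fun x => ∫ y : ℝ, K x y * f y) 2 volume ∧
      eLpNorm (fun x => ∫ y : ℝ, K x y * f y) 2 volume ≤
        ENNReal.ofReal C' * eLpNorm f 2 volume := by
  set c₀ : ℝ := (2:ℝ) ^ (1 + α) with hc₀def
  have hc₀ : 0 < c₀ := Real.rpow_pos_of_pos (by norm_num) _
  set g : ℝ → ℝ := fun t => jb t ^ (-(1 + α) / 2) with hgdef
  have hg_nn : ∀ t, 0 ≤ g t := fun t => Real.rpow_nonneg (jb_pos t).le _
  have hK0 : ∀ x y, 0 ≤ K x y := by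
    intro x y
    rw [hK]
    split_ifs with h
    · have := jb_pos x; have := jb_pos y; have := jb_pos (x - y)
      positivity
    · exact le_refl 0
  have hKb : ∀ x y, K x y ≤ c₀ * (g x * g y) := by
    intro x y
    rw [hK]
    split_ifs with h
    · exact key_bound hα h
    · exact mul_nonneg hc₀.le (mul_nonneg (hg_nn x) (hg_nn y))
  have hg_half : ∀ t : ℝ, g t * jb t ^ (-(1:ℝ)/2) = jb t ^ (-(1 + α/2)) := fun t => by
    rw [hgdef, ← Real.rpow_add (jb_pos t)]; congr 1; ring
  have hgg : ∀ t : ℝ, g t * g t = jb t ^ (-(1 + α)) := fun t => by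
    rw [hgdef, ← Real.rpow_add (jb_pos t)]; congr 1; ring
  have hg_le : ∀ t, g t ≤ jb t ^ (-(1:ℝ)/2) :=
    fun t => Real.rpow_le_rpow_of_exponent_le (one_le_jb t) (by linarith)
  have hint1 : Integrable (fun x : ℝ => jb x ^ (-(1 + α/2))) volume := jb_int (by linarith)
  have hint2 : Integrable (fun x : ℝ => jb x ^ (-(1 + α))) volume := jb_int (by linarith)
  set I1 : ℝ := ∫ x : ℝ, jb x ^ (-(1 + α/2)) with hI1def
  set I2 : ℝ := ∫ x : ℝ, jb x ^ (-(1 + α)) with hI2def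
  have hI1 : 0 ≤ I1 := integral_nonneg fun x => Real.rpow_nonneg (jb_pos x).le _
  have hI2 : 0 ≤ I2 := integral_nonneg fun x => Real.rpow_nonneg (jb_pos x).le _
  constructor
  · refine ⟨c₀ * (I1 + I2) + 1, by nlinarith, ?_, ?_⟩
    · intro y
      have step : (∫ x : ℝ, K x y * jb x ^ (-(1 : ℝ) / 2)) ≤
          ∫ x : ℝ, (c₀ * g y) * jb x ^ (-(1 + α/2)) := by
        refine integral_mono_of_nonneg (Filter.Eventually.of_forall fun x => ?_)
          (hint1.const_mul _) (Filter.Eventually.of_forall fun x => ?_)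
        · exact mul_nonneg (hK0 x y) (Real.rpow_nonneg (jb_pos x).le _)
        · have h1 : K x y * jb x ^ (-(1:ℝ)/2) ≤ (c₀ * (g x * g y)) * jb x ^ (-(1:ℝ)/2) :=
            mul_le_mul_of_nonneg_right (hKb x y) (Real.rpow_nonneg (jb_pos x).le _)
          calc K x y * jb x ^ (-(1:ℝ)/2) ≤ (c₀ * (g x * g y)) * jb x ^ (-(1:ℝ)/2) := h1
            _ = (c₀ * g y) * (g x * jb x ^ (-(1:ℝ)/2)) := by ring
            _ = (c₀ * g y) * jb x ^ (-(1 + α/2)) := by rw [hg_half]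
      rw [integral_const_mul] at step
      calc (∫ x : ℝ, K x y * jb x ^ (-(1 : ℝ) / 2)) ≤ (c₀ * g y) * I1 := step
        _ = (c₀ * I1) * g y := by ring
        _ ≤ (c₀ * (I1 + I2) + 1) * g y := by
            have h5 := hg_nn y
            nlinarith [mul_nonneg (mul_nonneg hc₀.le hI2) h5]
        _ = (c₀ * (I1 + I2) + 1) * jb y ^ (-(1 + α) / 2) := rfl
    · intro x
      have step : (∫ y : ℝ, K x y * jb y ^ (-(1 + α) / 2)) ≤
          ∫ y : ℝ, (c₀ * g x) * jb y ^ (-(1 + α)) := by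
        refine integral_mono_of_nonneg (Filter.Eventually.of_forall fun y => ?_)
          (hint2.const_mul _) (Filter.Eventually.of_forall fun y => ?_)
        · exact mul_nonneg (hK0 x y) (Real.rpow_nonneg (jb_pos y).le _)
        · have h1 : K x y * g y ≤ (c₀ * (g x * g y)) * g y :=
            mul_le_mul_of_nonneg_right (hKb x y) (hg_nn y)
          calc K x y * g y ≤ (c₀ * (g x * g y)) * g y := h1
            _ = (c₀ * g x) * (g y * g y) := by ring
            _ = (c₀ * g x) * jb y ^ (-(1 + α)) := by rw [hgg]
      rw [integral_const_mul] at step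
      calc (∫ y : ℝ, K x y * jb y ^ (-(1 + α) / 2)) ≤ (c₀ * g x) * I2 := step
        _ = (c₀ * I2) * g x := by ring
        _ ≤ (c₀ * (I1 + I2) + 1) * jb x ^ (-(1:ℝ)/2) := by
            have h2 := hg_le x
            have h3 := hg_nn x
            have h4 : (0:ℝ) ≤ jb x ^ (-(1:ℝ)/2) := Real.rpow_nonneg (jb_pos x).le _
            nlinarith [mul_le_mul_of_nonneg_left h2 (mul_nonneg hc₀.le hI2),
              mul_nonneg (mul_nonneg hc₀.le hI1) h4]
  · -- L² boundedness
    have hKm : Measurable (Function.uncurry K) := by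
      have hEq : Function.uncurry K = fun p : ℝ × ℝ =>
          if (jb p.1 + jb p.2) / 2 ≤ |p.1 - p.2| then
            jb p.2 ^ ((1 + α) / 2) / (jb (p.1 - p.2) ^ (1 + α) * jb p.1 ^ ((1 + α) / 2))
          else 0 := funext fun p => hK p.1 p.2
      rw [hEq]
      have hset : MeasurableSet {p : ℝ × ℝ | (jb p.1 + jb p.2) / 2 ≤ |p.1 - p.2|} := by
        apply measurableSet_le
        · exact (((jb_cont.comp continuous_fst).add (jb_cont.comp continuous_snd)).div_const 2).measurable
        · exact (continuous_fst.sub continuous_snd).abs.measurable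
      refine Measurable.ite hset ?_ measurable_const
      have hnum : Continuous fun p : ℝ × ℝ => jb p.2 ^ ((1 + α) / 2) :=
        (jb_rpow_cont _).comp continuous_snd
      have hden : Continuous fun p : ℝ × ℝ =>
          jb (p.1 - p.2) ^ (1 + α) * jb p.1 ^ ((1 + α) / 2) :=
        ((jb_rpow_cont _).comp (continuous_fst.sub continuous_snd)).mul
          ((jb_rpow_cont _).comp continuous_fst)
      exact (hnum.div hden fun p =>
        (mul_pos (Real.rpow_pos_of_pos (jb_pos _) _) (Real.rpow_pos_of_pos (jb_pos _) _)).ne').measurable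
    have hg2 : MemLp g 2 volume := by
      rw [memLp_two_iff_integrable_sq (jb_rpow_cont _).aestronglyMeasurable]
      refine hint2.congr (Filter.Eventually.of_forall fun t => ?_)
      show jb t ^ (-(1 + α)) = (jb t ^ (-(1 + α) / 2)) ^ 2
      rw [sq]
      exact (hgg t).symm
    have hNg : eLpNorm g 2 volume ≠ ⊤ := hg2.2.ne
    have hpqr : (1 : ℝ≥0∞) / 1 = 1 / 2 + 1 / 2 := by
      rw [ENNReal.div_add_div_same, one_add_one_eq_two, div_one, ENNReal.div_self (by norm_num) (by norm_num)]
    refine ⟨c₀ * (eLpNorm g 2 volume).toReal ^ 2 + 1, by positivity, fun f hf => ?_⟩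
    set M : ℝ := ∫ y : ℝ, g y * ‖f y‖ with hMdef
    have hM_int : Integrable (fun y => g y * ‖f y‖) volume := by
      have := MemLp.smul (p := 2) (q := 2) (r := 1) hf.norm hg2 (hpqr := ⟨by rw [inv_one]; exact ENNReal.inv_two_add_inv_two⟩)
      exact memLp_one_iff_integrable.mp this
    have hM0 : 0 ≤ M := integral_nonneg fun y => mul_nonneg (hg_nn y) (norm_nonneg _)
    have hTm : AEStronglyMeasurable (fun x => ∫ y : ℝ, K x y * f y) volume := by
      have h1 : AEStronglyMeasurable (fun p : ℝ × ℝ => K p.1 p.2 * f p.2)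
          (volume.prod volume) := hKm.aestronglyMeasurable.mul hf.1.comp_snd
      exact h1.integral_prod_right'
    have hTb : ∀ x, ‖∫ y : ℝ, K x y * f y‖ ≤ (c₀ * M) * g x := by
      intro x
      calc ‖∫ y : ℝ, K x y * f y‖ ≤ ∫ y : ℝ, ‖K x y * f y‖ :=
            norm_integral_le_integral_norm _
        _ ≤ ∫ y : ℝ, (c₀ * g x) * (g y * ‖f y‖) := by
            refine integral_mono_of_nonneg (Filter.Eventually.of_forall fun y => norm_nonneg _)
              (hM_int.const_mul _) (Filter.Eventually.of_forall fun y => ?_)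
            show ‖K x y * f y‖ ≤ c₀ * g x * (g y * ‖f y‖)
            have hnorm : ‖K x y * f y‖ = K x y * ‖f y‖ := by
              rw [norm_mul, Real.norm_eq_abs (K x y), abs_of_nonneg (hK0 x y)]
            rw [hnorm]
            calc K x y * ‖f y‖ ≤ (c₀ * (g x * g y)) * ‖f y‖ :=
                  mul_le_mul_of_nonneg_right (hKb x y) (norm_nonneg _)
              _ = (c₀ * g x) * (g y * ‖f y‖) := by ring
        _ = (c₀ * g x) * M := integral_const_mul _ _
        _ = (c₀ * M) * g x := by ring
    have hmem : MemLp (fun x => ∫ y : ℝ, K x y * f y) 2 volume := by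
      refine MemLp.of_le (hg2.const_mul (c₀ * M)) hTm
        (Filter.Eventually.of_forall fun x => ?_)
      exact (hTb x).trans (by rw [Real.norm_eq_abs]; exact le_abs_self _)
    refine ⟨hmem, ?_⟩
    have h1 : eLpNorm (fun x => ∫ y : ℝ, K x y * f y) 2 volume ≤
        eLpNorm (fun x => (c₀ * M) * g x) 2 volume :=
      eLpNorm_mono fun x => (hTb x).trans (by rw [Real.norm_eq_abs]; exact le_abs_self _)
    have h2 : eLpNorm (fun x => (c₀ * M) * g x) 2 volume =
        ENNReal.ofReal (c₀ * M) * eLpNorm g 2 volume := by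
      have := eLpNorm_const_smul (𝕜 := ℝ) (c₀ * M) g 2 volume
      rw [show ((c₀ * M) • g) = fun x => (c₀ * M) * g x from rfl] at this
      rw [this, Real.enorm_eq_ofReal (by positivity)]
    have hMle : ENNReal.ofReal M ≤ eLpNorm g 2 volume * eLpNorm f 2 volume := by
      have e1 : ENNReal.ofReal M = ∫⁻ y : ℝ, ENNReal.ofReal (g y * ‖f y‖) :=
        ofReal_integral_eq_lintegral_ofReal hM_int
          (Filter.Eventually.of_forall fun y => mul_nonneg (hg_nn y) (norm_nonneg _))
      have e2 : (∫⁻ y : ℝ, ENNReal.ofReal (g y * ‖f y‖)) ≤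
          ∫⁻ y : ℝ, ‖g y * ‖f y‖‖ₑ := lintegral_ofReal_le_lintegral_enorm _
      have e3 : (∫⁻ y : ℝ, ‖g y * ‖f y‖‖ₑ) =
          eLpNorm (fun y => g y * ‖f y‖) 1 volume :=
        eLpNorm_one_eq_lintegral_enorm.symm
      have e4 : eLpNorm (fun y => g y * ‖f y‖) 1 volume ≤
          eLpNorm g 2 volume * eLpNorm (fun y => ‖f y‖) 2 volume := by
        have := eLpNorm_smul_le_mul_eLpNorm (p := 2) (q := 2) (r := 1)
          (f := fun y => ‖f y‖) (φ := g) hf.1.norm hg2.1 (hpqr := ⟨by rw [inv_one]; exact ENNReal.inv_two_add_inv_two⟩)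
        exact this
      rw [eLpNorm_norm] at e4
      calc ENNReal.ofReal M = _ := e1
        _ ≤ _ := e2
        _ = _ := e3
        _ ≤ _ := e4
    calc eLpNorm (fun x => ∫ y : ℝ, K x y * f y) 2 volume
        ≤ ENNReal.ofReal (c₀ * M) * eLpNorm g 2 volume := h2 ▸ h1
      _ = ENNReal.ofReal c₀ * ENNReal.ofReal M * eLpNorm g 2 volume := by
          rw [ENNReal.ofReal_mul hc₀.le]
      _ ≤ ENNReal.ofReal c₀ * (eLpNorm g 2 volume * eLpNorm f 2 volume) *
            eLpNorm g 2 volume := by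
          exact mul_le_mul_left (mul_le_mul_right hMle _) _
      _ = (ENNReal.ofReal c₀ * eLpNorm g 2 volume ^ 2) * eLpNorm f 2 volume := by ring
      _ ≤ ENNReal.ofReal (c₀ * (eLpNorm g 2 volume).toReal ^ 2 + 1) * eLpNorm f 2 volume := by
          refine mul_le_mul_left ?_ _
          have : ENNReal.ofReal c₀ * eLpNorm g 2 volume ^ 2 =
              ENNReal.ofReal (c₀ * (eLpNorm g 2 volume).toReal ^ 2) := by
            rw [ENNReal.ofReal_mul hc₀.le, ENNReal.ofReal_pow ENNReal.toReal_nonneg,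
              ENNReal.ofReal_toReal hNg]
          rw [this]
          exact ENNReal.ofReal_le_ofReal (by nlinarith)
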